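/- (Lemma 1.1, abstract gap bound.) Let H and G be symmetric linear maps on a real inner product space E. Suppose u_1 ∈ E is a unit vector with H u_1 = λ_1 u_1 for some λ_1 ∈ ℝ, that λ_2 ∈ ℝ satisfies λ_2 ≥ λ_1, and that every v ∈ E with ⟨u_1, v⟩ = 0 satisfies ⟨v, H v⟩ ≥ λ_2 ‖v‖². Then the fundamental gap Γ := λ_2 − λ_1 satisfies Γ·⟨u_1, [G,[H,G]] u_1⟩ ≤ 2·‖[H,G] u_1‖². -/

import Mathlib

open scoped RealInnerProductSpace

/-- Lemma 1.1: the abstract fundamental-gap bound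
`Γ·⟨u_1, [G,[H,G]] u_1⟩ ≤ 2·‖[H,G] u_1‖²`, where `Γ = λ_2 − λ_1`, `u_1` is a normalized
eigenvector of `H` with eigenvalue `λ_1`, and `⟨v, H v⟩ ≥ λ_2 ‖v‖²` on the orthogonal
complement of `u_1`. -/
theorem abstract_gap_bound {E : Type*} [NormedAddCommGroup E] [InnerProductSpace ℝ E]
    (H G : E →ₗ[ℝ] E)
    (hH : ∀ x y : E, ⟪H x, y⟫ = ⟪x, H y⟫)
    (hG : ∀ x y : E, ⟪G x, y⟫ = ⟪x, G y⟫)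
    (u1 : E) (hu1 : ‖u1‖ = 1) (l1 l2 : ℝ)
    (h1 : H u1 = l1 • u1) (h12 : l1 ≤ l2)
    (h2 : ∀ v : E, ⟪u1, v⟫ = 0 → l2 * ‖v‖ ^ 2 ≤ ⟪v, H v⟫) :
    (l2 - l1) * ⟪u1, (G ∘ₗ (H ∘ₗ G - G ∘ₗ H) - (H ∘ₗ G - G ∘ₗ H) ∘ₗ G) u1⟫ ≤
      2 * ‖(H ∘ₗ G - G ∘ₗ H) u1‖ ^ 2 := by
  set Γ := l2 - l1 with hΓdef
  have hΓ : 0 ≤ Γ := by simp [hΓdef]; linarith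
  have huu : ⟪u1, u1⟫ = (1 : ℝ) := by
    rw [real_inner_self_eq_norm_sq, hu1]; norm_num
  set c := ⟪u1, G u1⟫ with hc
  set v := G u1 - c • u1 with hv
  set w := H (G u1) - l1 • G u1 with hw
  -- w is the commutator applied to u1
  have hw' : (H ∘ₗ G - G ∘ₗ H) u1 = w := by
    simp [hw, h1, map_smul]
  -- u1 ⟂ v
  have huv : ⟪u1, v⟫ = 0 := by
    simp [hv, inner_sub_right, inner_smul_right, huu, hc, hu1]
  -- u1 ⟂ w
  have huw : ⟪u1, w⟫ = 0 := by
    have : ⟪u1, H (G u1)⟫ = l1 * ⟪u1, G u1⟫ := by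
      rw [← hH, h1, inner_smul_left]; simp
    simp [hw, inner_sub_right, inner_smul_right, this]
  -- w = H v - l1 • v
  have hwv : w = H v - l1 • v := by
    simp [hw, hv, map_sub, map_smul, h1, smul_smul, smul_sub, mul_comm]
  -- ⟪v, w⟫ ≥ Γ ‖v‖²
  have hlow : Γ * ‖v‖ ^ 2 ≤ ⟪v, w⟫ := by
    have := h2 v huv
    have hvHv : ⟪v, w⟫ = ⟪v, H v⟫ - l1 * ‖v‖ ^ 2 := by
      rw [hwv, inner_sub_right, inner_smul_right, real_inner_self_eq_norm_sq]
    rw [hvHv]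
    have : Γ * ‖v‖ ^ 2 = l2 * ‖v‖ ^ 2 - l1 * ‖v‖ ^ 2 := by ring
    linarith
  -- the LHS inner product equals 2⟪v, w⟫
  have hGw : ⟪u1, G w⟫ = ⟪v, w⟫ := by
    rw [← hG]
    have : G u1 = v + c • u1 := by simp [hv]
    rw [this, inner_add_left, inner_smul_left]
    simp [huw]
  have hsecond : ⟪u1, H (G (G u1)) - G (H (G u1))⟫ = -⟪v, w⟫ := by
    have e1 : ⟪u1, H (G (G u1))⟫ = l1 * ⟪G u1, G u1⟫ := by
      rw [← hH, h1, inner_smul_left, hG]; simp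
    have e2 : ⟪u1, G (H (G u1))⟫ = ⟪G u1, H (G u1)⟫ := by rw [← hG]
    have e3 : ⟪G u1, w⟫ = ⟪v, w⟫ := by
      have : G u1 = v + c • u1 := by simp [hv]
      rw [this, inner_add_left, inner_smul_left]; simp [huw]
    rw [inner_sub_right, e1, e2]
    have : ⟪G u1, w⟫ = ⟪G u1, H (G u1)⟫ - l1 * ⟪G u1, G u1⟫ := by
      simp [hw, inner_sub_right, inner_smul_right]
    linarith [e3, this]
  have hmain : ⟪u1, (G ∘ₗ (H ∘ₗ G - G ∘ₗ H) - (H ∘ₗ G - G ∘ₗ H) ∘ₗ G) u1⟫ = 2 * ⟪v, w⟫ := by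
    have expand : (G ∘ₗ (H ∘ₗ G - G ∘ₗ H) - (H ∘ₗ G - G ∘ₗ H) ∘ₗ G) u1
        = G w - (H (G (G u1)) - G (H (G u1))) := by
      simp [hw, h1, map_sub, map_smul]
    rw [expand, inner_sub_right, hGw, hsecond]
    ring
  rw [hmain, hw']
  -- now prove Γ * (2 * ⟪v,w⟫) ≤ 2 * ‖w‖²
  have hcs : ⟪v, w⟫ ≤ ‖v‖ * ‖w‖ := real_inner_le_norm v w
  have ht0 : 0 ≤ ⟪v, w⟫ := le_trans (by positivity) hlow
  rcases eq_or_lt_of_le ht0 with h | h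
  · rw [← h]
    simp

  · have hsq : ⟪v, w⟫ * ⟪v, w⟫ ≤ (‖v‖ * ‖w‖) * (‖v‖ * ‖w‖) :=
      mul_le_mul hcs hcs ht0 (by positivity)
    have h1' : Γ * (⟪v, w⟫ * ⟪v, w⟫) ≤ Γ * ((‖v‖ * ‖w‖) * (‖v‖ * ‖w‖)) :=
      mul_le_mul_of_nonneg_left hsq hΓ
    have h2' : (Γ * ‖v‖ ^ 2) * ‖w‖ ^ 2 ≤ ⟪v, w⟫ * ‖w‖ ^ 2 :=
      mul_le_mul_of_nonneg_right hlow (sq_nonneg _)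
    nlinarith [h, h1', h2']
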